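/- For a right-angled hexagon in hyperbolic 3-space with complex side widths H_1,...,H_6, the law of cosines holds: cosh(H_i) = cosh(H_{i-2})·cosh(H_{i+2}) + sinh(H_{i-2})·sinh(H_{i+2})·cosh(H_{i+3}) for every i modulo 6. -/

import Mathlib

open Complex

/-- The cross ratio `R(a,b,c,d) = ((a−c)(b−d))/((a−d)(b−c))`. -/
noncomputable def crossRatio (a b c d : ℂ) : ℂ :=
  ((a - c) * (b - d)) / ((a - d) * (b - c))

/-- Two geodesics of `H³`, recorded by their (finite) ideal endpoints, are
perpendicular iff the cross ratio of their endpoints is `−1`. -/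
def Perp (u u' w w' : ℂ) : Prop := crossRatio u u' w w' = -1

/-- A right-angled hexagon in `H³`: a cyclically ordered 6-tuple of oriented
geodesics `γ i = (u_i, u'_i)` (recorded by their ideal endpoints, in generic
position so all endpoints are distinct), with consecutive geodesics orthogonal
and non-adjacent geodesics distinct, together with complex side widths `H i`
defined by the double-cross cross-ratio formula
`e^{H i} = R(u_{i−1}, u_{i+1}, u'_i, u_i)` (widths of `(γ_{i−1}, γ_{i+1}; γ_i)`). -/
structure RightAngledHexagon where
  γ : Fin 6 → ℂ × ℂ
  H : Fin 6 → ℂ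
  endpoints_distinct : Function.Injective (fun p : Fin 6 × Bool =>
    if p.2 then (γ p.1).2 else (γ p.1).1)
  nonadjacent_distinct : ∀ i : Fin 6, γ i ≠ γ (i + 2)
  perp : ∀ i : Fin 6, Perp (γ i).1 (γ i).2 (γ (i + 1)).1 (γ (i + 1)).2
  width : ∀ i : Fin 6, Complex.exp (H i) =
    crossRatio (γ (i - 1)).1 (γ (i + 1)).1 (γ i).2 (γ i).1

lemma coshVal (x n d : ℂ) (h : x * d = n) (hn : n ≠ 0) (hd : d ≠ 0) :
    (x + x⁻¹) / 2 = (n ^ 2 + d ^ 2) / (2 * (n * d)) := by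
  have hx : x = n / d := by rw [eq_div_iff hd]; exact h
  rw [hx]
  field_simp

lemma sinhVal (x n d : ℂ) (h : x * d = n) (hn : n ≠ 0) (hd : d ≠ 0) :
    (x - x⁻¹) / 2 = (n ^ 2 - d ^ 2) / (2 * (n * d)) := by
  have hx : x = n / d := by rw [eq_div_iff hd]; exact h
  rw [hx]
  field_simp

lemma assemble (n0 d0 n2 d2 n3 d3 n4 d4 : ℂ)
    (h0 : n0 * d0 ≠ 0) (h2 : n2 * d2 ≠ 0) (h3 : n3 * d3 ≠ 0) (h4 : n4 * d4 ≠ 0)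
    (hG : 4 * (n0 ^ 2 + d0 ^ 2) * (n2 * d2) * (n3 * d3) * (n4 * d4)
        = n0 * d0 * (2 * (n3 * d3) * (n2 ^ 2 + d2 ^ 2) * (n4 ^ 2 + d4 ^ 2)
            + (n2 ^ 2 - d2 ^ 2) * (n4 ^ 2 - d4 ^ 2) * (n3 ^ 2 + d3 ^ 2))) :
    (n0 ^ 2 + d0 ^ 2) / (2 * (n0 * d0))
      = (n4 ^ 2 + d4 ^ 2) / (2 * (n4 * d4)) * ((n2 ^ 2 + d2 ^ 2) / (2 * (n2 * d2)))
        + (n4 ^ 2 - d4 ^ 2) / (2 * (n4 * d4)) * ((n2 ^ 2 - d2 ^ 2) / (2 * (n2 * d2)))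
          * ((n3 ^ 2 + d3 ^ 2) / (2 * (n3 * d3))) := by
  have two : (2:ℂ) ≠ 0 := two_ne_zero
  rw [div_mul_div_comm, div_mul_div_comm, div_mul_div_comm,
    div_add_div _ _ (mul_ne_zero (mul_ne_zero two h4) (mul_ne_zero two h2))
      (mul_ne_zero (mul_ne_zero (mul_ne_zero two h4) (mul_ne_zero two h2)) (mul_ne_zero two h3)),
    div_eq_div_iff (mul_ne_zero two h0)
      (mul_ne_zero (mul_ne_zero (mul_ne_zero two h4) (mul_ne_zero two h2))
        (mul_ne_zero (mul_ne_zero (mul_ne_zero two h4) (mul_ne_zero two h2)) (mul_ne_zero two h3)))]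
  linear_combination (8 * (n2 * d2) * (n4 * d4)) * hG

lemma keyA (a0 b0 a1 a2 a4 a5 t x0 x2 x3 x4 : ℂ)
    (hQ1 : ((a0 + b0) * a1 - 2 * (a0 * b0)) * (2 * a1 * a2 - a2 ^ 2 - t ^ 2)
        - ((a2 ^ 2 + t ^ 2) * a1 - 2 * a2 * t ^ 2) * (2 * a1 - (a0 + b0)) = 0)
    (hQ2 : ((a0 + b0) * a5 - 2 * (a0 * b0)) * (2 * a5 * a4 - a4 ^ 2 - t ^ 2)
        - ((a4 ^ 2 + t ^ 2) * a5 - 2 * a4 * t ^ 2) * (2 * a5 - (a0 + b0)) = 0)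
    (hx0 : x0 * ((a5 - a0) * (a1 - b0)) = (a5 - b0) * (a1 - a0))
    (hx2 : x2 * (t * (a1 - a2)) = a1 * a2 - t ^ 2)
    (hx3 : x3 * ((a2 + t) * (a4 - t)) = (a2 - t) * (a4 + t))
    (hx4 : x4 * (a4 * a5 - t ^ 2) = t * (a5 - a4))
    (h5a0 : a5 - a0 ≠ 0) (h1b0 : a1 - b0 ≠ 0) (h5b0 : a5 - b0 ≠ 0) (h1a0 : a1 - a0 ≠ 0)
    (ht : t ≠ 0) (h12 : a1 - a2 ≠ 0) (h2pt : a2 + t ≠ 0) (h2mt : a2 - t ≠ 0)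
    (h4pt : a4 + t ≠ 0) (h4mt : a4 - t ≠ 0) (h54 : a5 - a4 ≠ 0)
    (hx0n : x0 ≠ 0) (hx2n : x2 ≠ 0) (hx3n : x3 ≠ 0) (hx4n : x4 ≠ 0) :
    (x0 + x0⁻¹) / 2
      = (x4 + x4⁻¹) / 2 * ((x2 + x2⁻¹) / 2)
        + (x4 - x4⁻¹) / 2 * ((x2 - x2⁻¹) / 2) * ((x3 + x3⁻¹) / 2) := by
  have hn2 : a1 * a2 - t ^ 2 ≠ 0 := by
    rw [← hx2]; exact mul_ne_zero hx2n (mul_ne_zero ht h12)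
  have hd4 : a4 * a5 - t ^ 2 ≠ 0 := by
    intro h
    rw [h, mul_zero] at hx4
    exact mul_ne_zero ht h54 hx4.symm
  have hG : 4 * (((a5 - b0) * (a1 - a0)) ^ 2 + ((a5 - a0) * (a1 - b0)) ^ 2)
        * ((a1 * a2 - t ^ 2) * (t * (a1 - a2)))
        * (((a2 - t) * (a4 + t)) * ((a2 + t) * (a4 - t)))
        * ((t * (a5 - a4)) * (a4 * a5 - t ^ 2))
      = ((a5 - b0) * (a1 - a0)) * ((a5 - a0) * (a1 - b0))
        * (2 * (((a2 - t) * (a4 + t)) * ((a2 + t) * (a4 - t)))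
            * ((a1 * a2 - t ^ 2) ^ 2 + (t * (a1 - a2)) ^ 2)
            * ((t * (a5 - a4)) ^ 2 + (a4 * a5 - t ^ 2) ^ 2)
          + ((a1 * a2 - t ^ 2) ^ 2 - (t * (a1 - a2)) ^ 2)
            * ((t * (a5 - a4)) ^ 2 - (a4 * a5 - t ^ 2) ^ 2)
            * (((a2 - t) * (a4 + t)) ^ 2 + ((a2 + t) * (a4 - t)) ^ 2)) := by
    linear_combination ((2)*a5^2*t^10 + (-2)*a5^4*t^8 + (-4)*a4*a5*t^10 + (4)*a4*a5^3*t^8 + (4)*a4^3*a5*t^8 + (-4)*a4^3*a5^3*t^6 + (-2)*a4^4*a5^2*t^6 + (2)*a4^4*a5^4*t^4 + (-3/2)*a2^2*a5^2*t^8 + (2)*a2^2*a5^4*t^6 + (3)*a2^2*a4*a5*t^8 + (-4)*a2^2*a4*a5^3*t^6 + (-3)*a2^2*a4^3*a5*t^6 + (4)*a2^2*a4^3*a5^3*t^4 + (3/2)*a2^2*a4^4*a5^2*t^4 + (-2)*a2^2*a4^4*a5^4*t^2 + (-1)*a2^3*a5^3*t^6 + (2)*a2^3*a4*a5^2*t^6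 + (-2)*a2^3*a4^3*a5^2*t^4 + (1)*a2^3*a4^4*a5^3*t^2 + (1/2)*a2^4*a5^2*t^6 + (-1)*a2^4*a4*a5*t^6 + (1)*a2^4*a4^3*a5*t^4 + (-1/2)*a2^4*a4^4*a5^2*t^2 + (-2)*a1*a5^3*t^8 + (4)*a1*a4*a5^4*t^6 + (-4)*a1*a4^3*a5^4*t^4 + (2)*a1*a4^4*a5^3*t^4 + (2)*a1*a2^2*a5^3*t^6 + (-4)*a1*a2^2*a4*a5^4*t^4 + (4)*a1*a2^2*a4^3*a5^4*t^2 + (-2)*a1*a2^2*a4^4*a5^3*t^2 + (1)*a1*a2^3*a5^2*t^6 + (-2)*a1*a2^3*a4*a5*t^6 + (2)*a1*a2^3*a4^3*a5*t^4 + (-1)*a1*a2^3*a4^4*a5^2*t^2 + (4)*a1^2*a5^2*t^8 + (-4)*a1^2*a4*a5*t^8 + (-4)*a1^2*a4*a5^3*t^6 + (4)*a1^2*a4^3*a5*t^6 + (4)*a1^2*a4^3*a5^3*t^4 + (-4)*a1^2*a4^4*a5^2*t^4 + (-4)*a1^2*a2^2*a5^2*t^6 + (4)*a1^2*a2^2*a4*a5*t^6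 + (4)*a1^2*a2^2*a4*a5^3*t^4 + (-4)*a1^2*a2^2*a4^3*a5*t^4 + (-4)*a1^2*a2^2*a4^3*a5^3*t^2 + (4)*a1^2*a2^2*a4^4*a5^2*t^2 + (2)*b0*a5^3*t^8 + (2)*b0*a4*t^10 + (-6)*b0*a4*a5^2*t^8 + (-2)*b0*a4^3*t^8 + (6)*b0*a4^3*a5^2*t^6 + (-2)*b0*a4^4*a5^3*t^4 + (-2)*b0*a2^2*a5^3*t^6 + (-3/2)*b0*a2^2*a4*t^8 + (11/2)*b0*a2^2*a4*a5^2*t^6 + (3/2)*b0*a2^2*a4^3*t^6 + (-11/2)*b0*a2^2*a4^3*a5^2*t^4 + (2)*b0*a2^2*a4^4*a5^3*t^2 + (-1)*b0*a2^3*a4*a5*t^6 + (1)*b0*a2^3*a4*a5^3*t^4 + (1)*b0*a2^3*a4^3*a5*t^4 + (-1)*b0*a2^3*a4^3*a5^3*t^2 + (1/2)*b0*a2^4*a4*t^6 + (-1/2)*b0*a2^4*a4*a5^2*t^4 + (-1/2)*b0*a2^4*a4^3*t^4 + (1/2)*b0*a2^4*a4^3*a5^2*t^2 + (2)*b0*a1*a4*a5*t^8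 + (-2)*b0*a1*a4*a5^3*t^6 + (-2)*b0*a1*a4^3*a5*t^6 + (2)*b0*a1*a4^3*a5^3*t^4 + (-2)*b0*a1*a2^2*a4*a5*t^6 + (2)*b0*a1*a2^2*a4*a5^3*t^4 + (2)*b0*a1*a2^2*a4^3*a5*t^4 + (-2)*b0*a1*a2^2*a4^3*a5^3*t^2 + (1)*b0*a1*a2^3*a4*t^6 + (-1)*b0*a1*a2^3*a4*a5^2*t^4 + (-1)*b0*a1*a2^3*a4^3*t^4 + (1)*b0*a1*a2^3*a4^3*a5^2*t^2 + (-2)*b0*a1^2*a5*t^8 + (2)*b0*a1^2*a4*t^8 + (2)*b0*a1^2*a4*a5^2*t^6 + (-2)*b0*a1^2*a4^3*t^6 + (-2)*b0*a1^2*a4^3*a5^2*t^4 + (2)*b0*a1^2*a4^4*a5*t^4 + (2)*b0*a1^2*a2^2*a5*t^6 + (-2)*b0*a1^2*a2^2*a4*t^6 + (-2)*b0*a1^2*a2^2*a4*a5^2*t^4 + (2)*b0*a1^2*a2^2*a4^3*t^4 + (2)*b0*a1^2*a2^2*a4^3*a5^2*t^2 + (-2)*b0*a1^2*a2^2*a4^4*a5*t^2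 + (2)*a0*a5^3*t^8 + (2)*a0*a4*t^10 + (-6)*a0*a4*a5^2*t^8 + (-2)*a0*a4^3*t^8 + (6)*a0*a4^3*a5^2*t^6 + (-2)*a0*a4^4*a5^3*t^4 + (-2)*a0*a2^2*a5^3*t^6 + (-3/2)*a0*a2^2*a4*t^8 + (11/2)*a0*a2^2*a4*a5^2*t^6 + (3/2)*a0*a2^2*a4^3*t^6 + (-11/2)*a0*a2^2*a4^3*a5^2*t^4 + (2)*a0*a2^2*a4^4*a5^3*t^2 + (-1)*a0*a2^3*a4*a5*t^6 + (1)*a0*a2^3*a4*a5^3*t^4 + (1)*a0*a2^3*a4^3*a5*t^4 + (-1)*a0*a2^3*a4^3*a5^3*t^2 + (1/2)*a0*a2^4*a4*t^6 + (-1/2)*a0*a2^4*a4*a5^2*t^4 + (-1/2)*a0*a2^4*a4^3*t^4 + (1/2)*a0*a2^4*a4^3*a5^2*t^2 + (2)*a0*a1*a4*a5*t^8 + (-2)*a0*a1*a4*a5^3*t^6 + (-2)*a0*a1*a4^3*a5*t^6 + (2)*a0*a1*a4^3*a5^3*t^4 + (-2)*a0*a1*a2^2*a4*a5*t^6 + (2)*a0*a1*a2^2*a4*a5^3*t^4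 + (2)*a0*a1*a2^2*a4^3*a5*t^4 + (-2)*a0*a1*a2^2*a4^3*a5^3*t^2 + (1)*a0*a1*a2^3*a4*t^6 + (-1)*a0*a1*a2^3*a4*a5^2*t^4 + (-1)*a0*a1*a2^3*a4^3*t^4 + (1)*a0*a1*a2^3*a4^3*a5^2*t^2 + (-2)*a0*a1^2*a5*t^8 + (2)*a0*a1^2*a4*t^8 + (2)*a0*a1^2*a4*a5^2*t^6 + (-2)*a0*a1^2*a4^3*t^6 + (-2)*a0*a1^2*a4^3*a5^2*t^4 + (2)*a0*a1^2*a4^4*a5*t^4 + (2)*a0*a1^2*a2^2*a5*t^6 + (-2)*a0*a1^2*a2^2*a4*t^6 + (-2)*a0*a1^2*a2^2*a4*a5^2*t^4 + (2)*a0*a1^2*a2^2*a4^3*t^4 + (2)*a0*a1^2*a2^2*a4^3*a5^2*t^2 + (-2)*a0*a1^2*a2^2*a4^4*a5*t^2 + (-2)*a0*b0*t^10 + (-2)*a0*b0*a5^2*t^8 + (8)*a0*b0*a4*a5*t^8 + (-8)*a0*b0*a4^3*a5*t^6 + (2)*a0*b0*a4^4*t^6 + (2)*a0*b0*a4^4*a5^2*t^4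 + (3/2)*a0*b0*a2^2*t^8 + (2)*a0*b0*a2^2*a5^2*t^6 + (-7)*a0*b0*a2^2*a4*a5*t^6 + (7)*a0*b0*a2^2*a4^3*a5*t^4 + (-3/2)*a0*b0*a2^2*a4^4*t^4 + (-2)*a0*b0*a2^2*a4^4*a5^2*t^2 + (1)*a0*b0*a2^3*a5*t^6 + (-2)*a0*b0*a2^3*a4*a5^2*t^4 + (2)*a0*b0*a2^3*a4^3*a5^2*t^2 + (-1)*a0*b0*a2^3*a4^4*a5*t^2 + (-1/2)*a0*b0*a2^4*t^6 + (1)*a0*b0*a2^4*a4*a5*t^4 + (-1)*a0*b0*a2^4*a4^3*a5*t^2 + (1/2)*a0*b0*a2^4*a4^4*t^2 + (2)*a0*b0*a1*a5*t^8 + (-4)*a0*b0*a1*a4*t^8 + (4)*a0*b0*a1*a4^3*t^6 + (-2)*a0*b0*a1*a4^4*a5*t^4 + (-2)*a0*b0*a1*a2^2*a5*t^6 + (4)*a0*b0*a1*a2^2*a4*t^6 + (-4)*a0*b0*a1*a2^2*a4^3*t^4 + (2)*a0*b0*a1*a2^2*a4^4*a5*t^2 + (-1)*a0*b0*a1*a2^3*t^6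 + (2)*a0*b0*a1*a2^3*a4*a5*t^4 + (-2)*a0*b0*a1*a2^3*a4^3*a5*t^2 + (1)*a0*b0*a1*a2^3*a4^4*t^2) * hQ1 + ((4)*a1*a2*t^10 + (-4)*a1*a2*a5^2*t^8 + (-4)*a1*a2*a4^2*t^8 + (4)*a1*a2*a4^2*a5^2*t^6 + (-3)*a1*a2^3*t^8 + (4)*a1*a2^3*a5^2*t^6 + (3)*a1*a2^3*a4^2*t^6 + (-4)*a1*a2^3*a4^2*a5^2*t^4 + (-2)*a1*a2^4*a5*t^6 + (2)*a1*a2^4*a4^2*a5*t^4 + (1)*a1*a2^5*t^6 + (-1)*a1*a2^5*a4^2*t^4 + (-2)*a1^2*t^10 + (4)*a1^2*a5^2*t^8 + (2)*a1^2*a4^2*t^8 + (-4)*a1^2*a4^2*a5^2*t^6 + (-1/2)*a1^2*a2^2*t^8 + (1/2)*a1^2*a2^2*a4^2*t^6 + (1)*a1^2*a2^3*a5*t^6 + (-1)*a1^2*a2^3*a4^2*a5*t^4 + (3)*a1^2*a2^4*t^6 + (-4)*a1^2*a2^4*a5^2*t^4 + (-3)*a1^2*a2^4*a4^2*t^4 +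 (4)*a1^2*a2^4*a4^2*a5^2*t^2 + (1)*a1^2*a2^5*a5*t^4 + (-1)*a1^2*a2^5*a4^2*a5*t^2 + (-1/2)*a1^2*a2^6*t^4 + (1/2)*a1^2*a2^6*a4^2*t^2 + (-2)*a1^3*a5*t^8 + (2)*a1^3*a4^2*a5*t^6 + (4)*a1^3*a2*t^8 + (-4)*a1^3*a2*a5^2*t^6 + (-4)*a1^3*a2*a4^2*t^6 + (4)*a1^3*a2*a4^2*a5^2*t^4 + (-5)*a1^3*a2^3*t^6 + (4)*a1^3*a2^3*a5^2*t^4 + (5)*a1^3*a2^3*a4^2*t^4 + (-4)*a1^3*a2^3*a4^2*a5^2*t^2 + (2)*a1^3*a2^4*a5*t^4 + (-2)*a1^3*a2^4*a4^2*a5*t^2 + (-1)*a1^3*a2^5*t^4 + (1)*a1^3*a2^5*a4^2*t^2 + (-2)*a1^4*t^8 + (2)*a1^4*a4^2*t^6 + (4)*a1^4*a2*a5*t^6 + (-4)*a1^4*a2*a4^2*a5*t^4 + (-4)*a1^4*a2^3*a5*t^4 + (4)*a1^4*a2^3*a4^2*a5*t^2 + (2)*a1^4*a2^4*t^4 + (-2)*a1^4*a2^4*a4^2*t^2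 + (-2)*b0*a2*t^10 + (2)*b0*a2*a5^2*t^8 + (2)*b0*a2*a4^2*t^8 + (-2)*b0*a2*a4^2*a5^2*t^6 + (3/2)*b0*a2^3*t^8 + (-2)*b0*a2^3*a5^2*t^6 + (-3/2)*b0*a2^3*a4^2*t^6 + (2)*b0*a2^3*a4^2*a5^2*t^4 + (1)*b0*a2^4*a5*t^6 + (-1)*b0*a2^4*a4^2*a5*t^4 + (-1/2)*b0*a2^5*t^6 + (1/2)*b0*a2^5*a4^2*t^4 + (-2)*b0*a1*a5^2*t^8 + (2)*b0*a1*a4^2*a5^2*t^6 + (2)*b0*a1*a2*a5*t^8 + (-2)*b0*a1*a2*a4^2*a5*t^6 + (-2)*b0*a1*a2^3*a5*t^6 + (2)*b0*a1*a2^3*a4^2*a5*t^4 + (-1)*b0*a1*a2^4*t^6 + (2)*b0*a1*a2^4*a5^2*t^4 + (1)*b0*a1*a2^4*a4^2*t^4 + (-2)*b0*a1*a2^4*a4^2*a5^2*t^2 + (-2)*b0*a1^2*a2*t^8 + (2)*b0*a1^2*a2*a5^2*t^6 + (2)*b0*a1^2*a2*a4^2*t^6 + (-2)*b0*a1^2*a2*a4^2*a5^2*t^4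 + (5/2)*b0*a1^2*a2^3*t^6 + (-2)*b0*a1^2*a2^3*a5^2*t^4 + (-5/2)*b0*a1^2*a2^3*a4^2*t^4 + (2)*b0*a1^2*a2^3*a4^2*a5^2*t^2 + (-1)*b0*a1^2*a2^4*a5*t^4 + (1)*b0*a1^2*a2^4*a4^2*a5*t^2 + (1/2)*b0*a1^2*a2^5*t^4 + (-1/2)*b0*a1^2*a2^5*a4^2*t^2 + (2)*b0*a1^3*t^8 + (-2)*b0*a1^3*a4^2*t^6 + (-2)*b0*a1^3*a2*a5*t^6 + (2)*b0*a1^3*a2*a4^2*a5*t^4 + (2)*b0*a1^3*a2^3*a5*t^4 + (-2)*b0*a1^3*a2^3*a4^2*a5*t^2 + (-1)*b0*a1^3*a2^4*t^4 + (1)*b0*a1^3*a2^4*a4^2*t^2 + (-2)*a0*a2*t^10 + (2)*a0*a2*a5^2*t^8 + (2)*a0*a2*a4^2*t^8 + (-2)*a0*a2*a4^2*a5^2*t^6 + (3/2)*a0*a2^3*t^8 + (-2)*a0*a2^3*a5^2*t^6 + (-3/2)*a0*a2^3*a4^2*t^6 + (2)*a0*a2^3*a4^2*a5^2*t^4 +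 (1)*a0*a2^4*a5*t^6 + (-1)*a0*a2^4*a4^2*a5*t^4 + (-1/2)*a0*a2^5*t^6 + (1/2)*a0*a2^5*a4^2*t^4 + (-2)*a0*a1*a5^2*t^8 + (2)*a0*a1*a4^2*a5^2*t^6 + (2)*a0*a1*a2*a5*t^8 + (-2)*a0*a1*a2*a4^2*a5*t^6 + (-2)*a0*a1*a2^3*a5*t^6 + (2)*a0*a1*a2^3*a4^2*a5*t^4 + (-1)*a0*a1*a2^4*t^6 + (2)*a0*a1*a2^4*a5^2*t^4 + (1)*a0*a1*a2^4*a4^2*t^4 + (-2)*a0*a1*a2^4*a4^2*a5^2*t^2 + (-2)*a0*a1^2*a2*t^8 + (2)*a0*a1^2*a2*a5^2*t^6 + (2)*a0*a1^2*a2*a4^2*t^6 + (-2)*a0*a1^2*a2*a4^2*a5^2*t^4 + (5/2)*a0*a1^2*a2^3*t^6 + (-2)*a0*a1^2*a2^3*a5^2*t^4 + (-5/2)*a0*a1^2*a2^3*a4^2*t^4 + (2)*a0*a1^2*a2^3*a4^2*a5^2*t^2 + (-1)*a0*a1^2*a2^4*a5*t^4 + (1)*a0*a1^2*a2^4*a4^2*a5*t^2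 + (1/2)*a0*a1^2*a2^5*t^4 + (-1/2)*a0*a1^2*a2^5*a4^2*t^2 + (2)*a0*a1^3*t^8 + (-2)*a0*a1^3*a4^2*t^6 + (-2)*a0*a1^3*a2*a5*t^6 + (2)*a0*a1^3*a2*a4^2*a5*t^4 + (2)*a0*a1^3*a2^3*a5*t^4 + (-2)*a0*a1^3*a2^3*a4^2*a5*t^2 + (-1)*a0*a1^3*a2^4*t^4 + (1)*a0*a1^3*a2^4*a4^2*t^2 + (2)*a0*b0*t^10 + (-2)*a0*b0*a4^2*t^8 + (-4)*a0*b0*a2*a5*t^8 + (4)*a0*b0*a2*a4^2*a5*t^6 + (1/2)*a0*b0*a2^2*t^8 + (-1/2)*a0*b0*a2^2*a4^2*t^6 + (3)*a0*b0*a2^3*a5*t^6 + (-3)*a0*b0*a2^3*a4^2*a5*t^4 + (-1)*a0*b0*a2^4*t^6 + (1)*a0*b0*a2^4*a4^2*t^4 + (-1)*a0*b0*a2^5*a5*t^4 + (1)*a0*b0*a2^5*a4^2*a5*t^2 + (1/2)*a0*b0*a2^6*t^4 + (-1/2)*a0*b0*a2^6*a4^2*t^2 + (2)*a0*b0*a1*a5*t^8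 + (-2)*a0*b0*a1*a4^2*a5*t^6 + (-2)*a0*b0*a1^2*t^8 + (2)*a0*b0*a1^2*a4^2*t^6) * hQ2
  have e0 := coshVal x0 _ _ hx0 (mul_ne_zero h5b0 h1a0) (mul_ne_zero h5a0 h1b0)
  have e2 := coshVal x2 _ _ hx2 hn2 (mul_ne_zero ht h12)
  have e2' := sinhVal x2 _ _ hx2 hn2 (mul_ne_zero ht h12)
  have e3 := coshVal x3 _ _ hx3 (mul_ne_zero h2mt h4pt) (mul_ne_zero h2pt h4mt)
  have e4 := coshVal x4 _ _ hx4 (mul_ne_zero ht h54) hd4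
  have e4' := sinhVal x4 _ _ hx4 (mul_ne_zero ht h54) hd4
  rw [e0, e2, e2', e3, e4, e4']
  exact assemble _ _ _ _ _ _ _ _
    (mul_ne_zero (mul_ne_zero h5b0 h1a0) (mul_ne_zero h5a0 h1b0))
    (mul_ne_zero hn2 (mul_ne_zero ht h12))
    (mul_ne_zero (mul_ne_zero h2mt h4pt) (mul_ne_zero h2pt h4mt))
    (mul_ne_zero (mul_ne_zero ht h54) hd4) hG

lemma ne_aux {u v X : ℂ} (h : u ≠ v) (hX : X = 2 * (u - v)) : X ≠ 0 := by
  rw [hX]; exact mul_ne_zero two_ne_zero (sub_ne_zero.mpr h)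

/-- law of cosines for right-angled hexagons: for every `i` (mod 6),
`cosh H_i = cosh H_{i−2} · cosh H_{i+2} + sinh H_{i−2} · sinh H_{i+2} · cosh H_{i+3}`. -/
theorem hexagon_law_of_cosines (hex : RightAngledHexagon) :
    ∀ i : Fin 6,
      Complex.cosh (hex.H i)
        = Complex.cosh (hex.H (i - 2)) * Complex.cosh (hex.H (i + 2))
          + Complex.sinh (hex.H (i - 2)) * Complex.sinh (hex.H (i + 2))
            * Complex.cosh (hex.H (i + 3)) := by
  intro i
  have em1 : ∀ j : Fin 6, j - 1 = j + 5 := by decide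
  have em2 : ∀ j : Fin 6, j - 2 = j + 4 := by decide
  have efin : ∀ k l m : Fin 6, k + l = m → i + k + l = i + m := fun k l m h => by
    rw [add_assoc, h]
  have e21 : i + 2 - 1 = i + 1 := by rw [em1]; exact efin 2 5 1 (by decide)
  have e23 : i + 2 + 1 = i + 3 := efin 2 1 3 (by decide)
  have e32 : i + 3 - 1 = i + 2 := by rw [em1]; exact efin 3 5 2 (by decide)
  have e34 : i + 3 + 1 = i + 4 := efin 3 1 4 (by decide)
  have e43 : i + 4 - 1 = i + 3 := by rw [em1]; exact efin 4 5 3 (by decide)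
  have e45 : i + 4 + 1 = i + 5 := efin 4 1 5 (by decide)
  have e12 : i + 1 + 1 = i + 2 := efin 1 1 2 (by decide)
  have e50 : i + 5 + 1 = i := by
    rw [add_assoc, show (5 + 1 : Fin 6) = 0 by decide, add_zero]
  have w0 := hex.width i; rw [em1] at w0
  have w2 := hex.width (i + 2); rw [e21, e23] at w2
  have w3 := hex.width (i + 3); rw [e32, e34] at w3
  have w4 := hex.width (i + 4); rw [e43, e45] at w4
  have p0 := hex.perp i
  have p1 := hex.perp (i + 1); rw [e12] at p1
  have p2 := hex.perp (i + 2); rw [e23] at p2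
  have p3 := hex.perp (i + 3); rw [e34] at p3
  have p4 := hex.perp (i + 4); rw [e45] at p4
  have p5 := hex.perp (i + 5); rw [e50] at p5
  rw [em2]
  have inj := hex.endpoints_distinct
  have haa : ∀ {p q : Fin 6}, p ≠ q → (hex.γ p).1 ≠ (hex.γ q).1 := by
    intro p q h hh
    have h2 := inj (a₁ := (p, false)) (a₂ := (q, false)) (by simpa using hh)
    rw [Prod.mk.injEq] at h2
    exact h h2.1
  have hab : ∀ (p q : Fin 6), (hex.γ p).1 ≠ (hex.γ q).2 := by
    intro p q hh
    have h2 := inj (a₁ := (p, false)) (a₂ := (q, true)) (by simpa using hh)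
    simp at h2
  have hba : ∀ (p q : Fin 6), (hex.γ p).2 ≠ (hex.γ q).1 := fun p q => (hab q p).symm
  have hne : ∀ {k l : Fin 6}, k ≠ l → i + k ≠ i + l := fun h hh => h (add_left_cancel hh)
  have hne0 : ∀ {k : Fin 6}, k ≠ 0 → i + k ≠ i := fun h hh => h (by
    rwa [add_eq_left] at hh)
  simp only [Complex.cosh, Complex.sinh, Complex.exp_neg]
  set a0 := (hex.γ i).1 with ha0
  set b0 := (hex.γ i).2 with hb0
  set a1 := (hex.γ (i + 1)).1 with ha1
  set b1 := (hex.γ (i + 1)).2 with hb1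
  set a2 := (hex.γ (i + 2)).1 with ha2
  set b2 := (hex.γ (i + 2)).2 with hb2
  set a3 := (hex.γ (i + 3)).1 with ha3
  set b3 := (hex.γ (i + 3)).2 with hb3
  set a4 := (hex.γ (i + 4)).1 with ha4
  set b4 := (hex.γ (i + 4)).2 with hb4
  set a5 := (hex.γ (i + 5)).1 with ha5
  set b5 := (hex.γ (i + 5)).2 with hb5
  set x0 := Complex.exp (hex.H i) with hx0
  set x2 := Complex.exp (hex.H (i + 2)) with hx2
  set x3 := Complex.exp (hex.H (i + 3)) with hx3
  set x4 := Complex.exp (hex.H (i + 4)) with hx4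
  have hP0 : 2*(a0*b0) + 2*(a1*b1) = (a0+b0)*(a1+b1) := by
    simp only [Perp, crossRatio] at p0
    linear_combination (div_eq_iff (mul_ne_zero (sub_ne_zero.mpr (hab i (i+1)))
      (sub_ne_zero.mpr (hba i (i+1))))).mp p0
  have hP1 : 2*(a1*b1) + 2*(a2*b2) = (a1+b1)*(a2+b2) := by
    simp only [Perp, crossRatio] at p1
    linear_combination (div_eq_iff (mul_ne_zero (sub_ne_zero.mpr (hab (i+1) (i+2)))
      (sub_ne_zero.mpr (hba (i+1) (i+2))))).mp p1
  have hP2 : 2*(a2*b2) + 2*(a3*b3) = (a2+b2)*(a3+b3) := by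
    simp only [Perp, crossRatio] at p2
    linear_combination (div_eq_iff (mul_ne_zero (sub_ne_zero.mpr (hab (i+2) (i+3)))
      (sub_ne_zero.mpr (hba (i+2) (i+3))))).mp p2
  have hP3 : 2*(a3*b3) + 2*(a4*b4) = (a3+b3)*(a4+b4) := by
    simp only [Perp, crossRatio] at p3
    linear_combination (div_eq_iff (mul_ne_zero (sub_ne_zero.mpr (hab (i+3) (i+4)))
      (sub_ne_zero.mpr (hba (i+3) (i+4))))).mp p3
  have hP4 : 2*(a4*b4) + 2*(a5*b5) = (a4+b4)*(a5+b5) := by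
    simp only [Perp, crossRatio] at p4
    linear_combination (div_eq_iff (mul_ne_zero (sub_ne_zero.mpr (hab (i+4) (i+5)))
      (sub_ne_zero.mpr (hba (i+4) (i+5))))).mp p4
  have hP5 : 2*(a5*b5) + 2*(a0*b0) = (a5+b5)*(a0+b0) := by
    simp only [Perp, crossRatio] at p5
    linear_combination (div_eq_iff (mul_ne_zero (sub_ne_zero.mpr (hab (i+5) i))
      (sub_ne_zero.mpr (hba (i+5) i)))).mp p5
  have hW0 : x0 * ((a5 - a0) * (a1 - b0)) = (a5 - b0) * (a1 - a0) := by
    rw [w0]; simp only [crossRatio]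
    exact div_mul_cancel₀ _ (mul_ne_zero (sub_ne_zero.mpr (haa (hne0 (by decide))))
      (sub_ne_zero.mpr (hab (i+1) i)))
  have hW2 : x2 * ((a1 - a2) * (a3 - b2)) = (a1 - b2) * (a3 - a2) := by
    rw [w2]; simp only [crossRatio]
    exact div_mul_cancel₀ _ (mul_ne_zero (sub_ne_zero.mpr (haa (hne (by decide))))
      (sub_ne_zero.mpr (hab (i+3) (i+2))))
  have hW3 : x3 * ((a2 - a3) * (a4 - b3)) = (a2 - b3) * (a4 - a3) := by
    rw [w3]; simp only [crossRatio]
    exact div_mul_cancel₀ _ (mul_ne_zero (sub_ne_zero.mpr (haa (hne (by decide))))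
      (sub_ne_zero.mpr (hab (i+4) (i+3))))
  have hW4 : x4 * ((a3 - a4) * (a5 - b4)) = (a3 - b4) * (a5 - a4) := by
    rw [w4]; simp only [crossRatio]
    exact div_mul_cancel₀ _ (mul_ne_zero (sub_ne_zero.mpr (haa (hne (by decide))))
      (sub_ne_zero.mpr (hab (i+5) (i+4))))
  exact keyA (2*a0 - a3 - b3) (2*b0 - a3 - b3) (2*a1 - a3 - b3) (2*a2 - a3 - b3) (2*a4 - a3 - b3) (2*a5 - a3 - b3) (b3 - a3) x0 x2 x3 x4
    (by linear_combination (-4*(2*(2*a1 - a3 - b3)*(2*a2 - a3 - b3) - (2*a2 - a3 - b3)^2 - (b3 - a3)^2))*hP0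
          + ((2*(2*a1 - a3 - b3) - (2*a0 - a3 - b3) - (2*b0 - a3 - b3))*(4*(2*a2 - a3 - b3)))*hP1
          + (-2*(2*(2*a1 - a3 - b3) - (2*a0 - a3 - b3) - (2*b0 - a3 - b3))*(2*(2*a2 - a3 - b3) - (2*a1 - a3 - b3) - (2*b1 - a3 - b3)))*hP2)
    (by linear_combination (-4*(2*(2*a5 - a3 - b3)*(2*a4 - a3 - b3) - (2*a4 - a3 - b3)^2 - (b3 - a3)^2))*hP5
          + ((2*(2*a5 - a3 - b3) - (2*a0 - a3 - b3) - (2*b0 - a3 - b3))*(4*(2*a4 - a3 - b3)))*hP4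
          + (-2*(2*(2*a5 - a3 - b3) - (2*a0 - a3 - b3) - (2*b0 - a3 - b3))*(2*(2*a4 - a3 - b3) - (2*a5 - a3 - b3) - (2*b5 - a3 - b3)))*hP3)
    (by linear_combination 4*hW0)
    (by
      have h5 : (x2 * ((b3 - a3)*((2*a1 - a3 - b3) - (2*a2 - a3 - b3))) - ((2*a1 - a3 - b3)*(2*a2 - a3 - b3) - (b3 - a3)^2)) * ((2*a2 - a3 - b3) + (b3 - a3)) = 0 := by
        linear_combination (-4*(2*a2 - a3 - b3))*hW2 + (-2*(x2*((2*a1 - a3 - b3) - (2*a2 - a3 - b3)) + (2*a2 - a3 - b3) + (b3 - a3)))*hP2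
      rcases mul_eq_zero.mp h5 with h6 | h6
      · linear_combination h6
      · exact absurd h6 (ne_aux (haa (hne (by decide : (2:Fin 6) ≠ 3))) (by ring)))
    (by linear_combination 4*hW3)
    (by
      have h5 : (x4 * ((2*a4 - a3 - b3)*(2*a5 - a3 - b3) - (b3 - a3)^2) - (b3 - a3)*((2*a5 - a3 - b3) - (2*a4 - a3 - b3))) * ((2*a4 - a3 - b3) + (b3 - a3)) = 0 := by
        linear_combination (-4*(2*a4 - a3 - b3))*hW4 + (2*(x4*((b3 - a3) + (2*a4 - a3 - b3)) + ((2*a5 - a3 - b3) - (2*a4 - a3 - b3))))*hP3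
      rcases mul_eq_zero.mp h5 with h6 | h6
      · linear_combination h6
      · exact absurd h6 (ne_aux (haa (hne (by decide : (4:Fin 6) ≠ 3))) (by ring)))
    (ne_aux (haa (hne0 (by decide : (5:Fin 6) ≠ 0))) (by ring))
    (ne_aux (hab (i+1) i) (by ring))
    (ne_aux (hab (i+5) i) (by ring))
    (ne_aux (haa (hne0 (by decide : (1:Fin 6) ≠ 0))) (by ring))
    (sub_ne_zero.mpr (hba (i+3) (i+3)))
    (ne_aux (haa (hne (by decide : (1:Fin 6) ≠ 2))) (by ring))
    (ne_aux (haa (hne (by decide : (2:Fin 6) ≠ 3))) (by ring))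
    (ne_aux (hab (i+2) (i+3)) (by ring))
    (ne_aux (haa (hne (by decide : (4:Fin 6) ≠ 3))) (by ring))
    (ne_aux (hab (i+4) (i+3)) (by ring))
    (ne_aux (haa (hne (by decide : (5:Fin 6) ≠ 4))) (by ring))
    (Complex.exp_ne_zero _) (Complex.exp_ne_zero _) (Complex.exp_ne_zero _)
    (Complex.exp_ne_zero _)
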